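/- arXiv:math/0608669 — 4 statements merged into one kernel-verified Lean document; each statement's English description precedes it below -/
import Mathlib

section
/- Let λ ∈ ℂ and let e : (0,∞) → ℂ be a function. Let f, g, h be tempered distributions on ℝ such that for every a > 0 and every Schwartz function φ: ⟨f, φ(·/a)⟩ = a^{λ+1}(⟨f, φ⟩ + e(a)⟨g, φ⟩) and ⟨g, φ(·/a)⟩ = a^{λ+1}(⟨g, φ⟩ + e(a)⟨h, φ⟩). Then for all a, b > 0 and every Schwartz φ: (e(ab) − e(a) − e(b))⟨g, φ⟩ = e(a)e(b)⟨h, φ⟩. -/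
open MeasureTheory SchwartzMap Complex Finset

noncomputable section

variable {E : Type*} [NormedAddCommGroup E] [NormedSpace ℝ E]

/-- The dilation operator on Schwartz functions: for `a ≠ 0`,
`dilate a φ = fun x => φ (a⁻¹ • x)`, i.e. `x ↦ φ (x / a)` (junk value `0` for `a = 0`). -/
def dilate (a : ℝ) : 𝓢(E, ℂ) →L[ℝ] 𝓢(E, ℂ) :=
  if h : a = 0 then 0 else
    SchwartzMap.compCLM ℝ (g := fun x : E => a⁻¹ • x)
      (by exact (a⁻¹ • ContinuousLinearMap.id ℝ E).hasTemperateGrowth)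
      ⟨1, |a|, fun x => by
        have ha : a ≠ 0 := h
        have h0 : |a| ≠ 0 := abs_ne_zero.mpr ha
        have hx : ‖a⁻¹ • x‖ = |a|⁻¹ * ‖x‖ := by
          rw [norm_smul, norm_inv, Real.norm_eq_abs]
        have key : |a| * (1 + ‖a⁻¹ • x‖) ^ 1 = |a| + ‖x‖ := by
          rw [pow_one, hx, mul_add, mul_one, ← mul_assoc, mul_inv_cancel₀ h0, one_mul]
        calc ‖x‖ ≤ |a| + ‖x‖ := le_add_of_nonneg_left (abs_nonneg a)
          _ = |a| * (1 + ‖a⁻¹ • x‖) ^ 1 := key.symm⟩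

lemma dilate_apply (a : ℝ) (ha : a ≠ 0) (φ : 𝓢(E, ℂ)) (x : E) :
    dilate a φ x = φ (a⁻¹ • x) := by
  simp [dilate, dif_neg ha]
  rfl

/-- On `ℝ`, `dilate a φ` is the function `x ↦ φ (x / a)`. -/
lemma dilate_apply_real (a : ℝ) (ha : a ≠ 0) (φ : 𝓢(ℝ, ℂ)) (x : ℝ) :
    dilate a φ x = φ (x / a) := by
  rw [dilate_apply a ha, smul_eq_mul, inv_mul_eq_div]

/-- A tempered distribution on `ℝ` is homogeneous of degree `λ` if
`⟨f, φ(·/a)⟩ = a^(λ+1) ⟨f, φ⟩` for all `a > 0` and all Schwartz `φ`. -/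
def IsHomogeneous (lam : ℂ) (f : 𝓢(ℝ, ℂ) →L[ℂ] ℂ) : Prop :=
  ∀ a : ℝ, 0 < a → ∀ φ : 𝓢(ℝ, ℂ), f (dilate a φ) = (a : ℂ) ^ (lam + 1) * f φ

lemma dilate_mul (a b : ℝ) (ha : a ≠ 0) (hb : b ≠ 0) (φ : 𝓢(E, ℂ)) :
    dilate (a * b) φ = dilate a (dilate b φ) := by
  ext x
  rw [dilate_apply _ (mul_ne_zero ha hb), dilate_apply _ ha, dilate_apply _ hb,
    smul_smul, mul_inv, mul_comm]

/-- if `⟨f, φ(·/a)⟩ = a^(λ+1)(⟨f, φ⟩ + e(a)⟨g, φ⟩)` and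
`⟨g, φ(·/a)⟩ = a^(λ+1)(⟨g, φ⟩ + e(a)⟨h, φ⟩)` for all `a > 0`, then
`(e(ab) − e(a) − e(b))⟨g, φ⟩ = e(a)e(b)⟨h, φ⟩` for all `a, b > 0` and Schwartz `φ`. -/
theorem stmt_1 (lam : ℂ) (e : ℝ → ℂ) (f g h : 𝓢(ℝ, ℂ) →L[ℂ] ℂ)
    (hf : ∀ a : ℝ, 0 < a → ∀ φ : 𝓢(ℝ, ℂ),
      f (dilate a φ) = (a : ℂ) ^ (lam + 1) * (f φ + e a * g φ))
    (hg : ∀ a : ℝ, 0 < a → ∀ φ : 𝓢(ℝ, ℂ),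
      g (dilate a φ) = (a : ℂ) ^ (lam + 1) * (g φ + e a * h φ)) :
    ∀ a b : ℝ, 0 < a → 0 < b → ∀ φ : 𝓢(ℝ, ℂ),
      (e (a * b) - e a - e b) * g φ = e a * e b * h φ := by
  intro a b ha hb φ
  have hab : (0:ℝ) < a * b := mul_pos ha hb
  have key : f (dilate (a * b) φ) = f (dilate a (dilate b φ)) := by
    rw [dilate_mul a b ha.ne' hb.ne']
  rw [hf _ hab, hf _ ha, hf _ hb, hg _ hb] at key
  have hpow : ((a * b : ℝ) : ℂ) ^ (lam + 1) =
      (a : ℂ) ^ (lam + 1) * (b : ℂ) ^ (lam + 1) := by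
    push_cast
    exact Complex.mul_cpow_ofReal_nonneg ha.le hb.le _
  have hane : (a : ℂ) ^ (lam + 1) ≠ 0 := by
    simp [Complex.cpow_eq_zero_iff, Complex.ofReal_ne_zero.mpr ha.ne']
  have hbne : (b : ℂ) ^ (lam + 1) ≠ 0 := by
    simp [Complex.cpow_eq_zero_iff, Complex.ofReal_ne_zero.mpr hb.ne']
  rw [hpow] at key
  have key2 : f φ + e (a * b) * g φ =
      f φ + e b * g φ + e a * (g φ + e b * h φ) := by
    apply mul_left_cancel₀ (mul_ne_zero hane hbne)
    linear_combination key
  linear_combination key2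

end
end

section
/- Let n ≥ 1 be an integer, k ∈ ℕ, and φ : ℝ → ℂ a Schwartz function. For m ∈ ℕ define F_m(φ) := ∫₀^∞ x^{−n}(log x)^m ( φ(x) − Σ_{j=0}^{n−2} (x^j/j!) φ^{(j)}(0) − (x^{n−1}/(n−1)!) φ^{(n−1)}(0) · 1_{[0,1]}(x) ) dx (an absolutely convergent integral). Then for every a > 0: F_k applied to the dilated function x ↦ φ(x/a) equals a^{−n+1} [ Σ_{r=0}^{k} (k choose r)(log a)^r F_{k−r}(φ) + ((log a)^{k+1}/((k+1)(n−1)!)) φ^{(n−1)}(0) ]. -/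
open MeasureTheory SchwartzMap Complex Finset

noncomputable section

variable {E : Type*} [NormedAddCommGroup E] [NormedSpace ℝ E]

/-- The regularized functional
`F_m(φ) = ⟨P(x₊^(−n) log^m x₊), φ⟩ = ∫₀^∞ x^(−n) (log x)^m (φ(x) −
  ∑_{j=0}^{n−2} x^j/j! φ^(j)(0) − (x^(n−1)/(n−1)!) φ^(n−1)(0) 1_{[0,1]}(x)) dx`. -/
def Freg (n m : ℕ) (φ : 𝓢(ℝ, ℂ)) : ℂ :=
  ∫ x in Set.Ioi (0 : ℝ), (x : ℂ) ^ (-(n : ℤ)) * (Real.log x : ℂ) ^ m *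
    (φ x - (∑ j ∈ Finset.range (n - 1),
        ((x : ℂ) ^ j / (j.factorial : ℂ)) * iteratedDeriv j (⇑φ) 0)
      - ((x : ℂ) ^ (n - 1) / ((n - 1).factorial : ℂ)) * iteratedDeriv (n - 1) (⇑φ) 0 *
          Set.indicator (Set.Icc (0 : ℝ) 1) (fun _ => (1 : ℂ)) x)
namespace Stmt5Aux

noncomputable def ind (x : ℝ) : ℂ := Set.indicator (Set.Icc (0:ℝ) 1) (fun _ => (1:ℂ)) x

noncomputable def R (p : ℕ) (φ : 𝓢(ℝ, ℂ)) (x : ℝ) : ℂ :=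
  φ x - (∑ j ∈ Finset.range p, ((x:ℂ)^j / (j.factorial:ℂ)) * iteratedDeriv j (⇑φ) 0)
    - ((x:ℂ)^p / (p.factorial:ℂ)) * iteratedDeriv p (⇑φ) 0 * ind x

noncomputable def g (p m : ℕ) (φ : 𝓢(ℝ, ℂ)) (x : ℝ) : ℂ :=
  (x:ℂ)^(-((p:ℤ)+1)) * (Real.log x : ℂ)^m * R p φ x

lemma Freg_eq (p m : ℕ) (φ : 𝓢(ℝ, ℂ)) :
    Freg (p+1) m φ = ∫ x in Set.Ioi (0:ℝ), g p m φ x := by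
  unfold Freg g R ind
  norm_num

lemma itdw_eq {f : ℝ → ℂ} (hf : ContDiff ℝ (⊤:ℕ∞) f) (j : ℕ) {x : ℝ}
    (hx : x ∈ Set.Icc (0:ℝ) 1) :
    iteratedDerivWithin j f (Set.Icc 0 1) x = iteratedDeriv j f x := by
  rw [iteratedDerivWithin_eq_iteratedFDerivWithin, iteratedDeriv_eq_iteratedFDeriv]
  congr 1
  have h := (contDiff_iff_ftaylorSeries.mp hf).hasFTaylorSeriesUpToOn (Set.Icc (0:ℝ) 1)
  have h2 := h.eq_iteratedFDerivWithin_of_uniqueDiffOn (m := j) (by exact_mod_cast le_top)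
    (uniqueDiffOn_Icc one_pos) hx
  rw [← h2]; rfl

end Stmt5Aux
namespace Stmt5Aux

lemma log_pow_le (m : ℕ) : ∃ C : ℝ, 0 ≤ C ∧ ∀ x : ℝ, 1 ≤ x →
    |Real.log x| ^ m ≤ C * x ^ ((1:ℝ)/2) := by
  refine ⟨(2*(m+1):ℝ)^m, by positivity, fun x hx => ?_⟩
  have hx0 : (0:ℝ) ≤ x := le_trans zero_le_one hx
  have hlog : |Real.log x| = Real.log x := abs_of_nonneg (Real.log_nonneg hx)
  have hε : (0:ℝ) < ((2:ℝ)*(m+1))⁻¹ := by positivity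
  have h1 : Real.log x ≤ (2*(m+1)) * x ^ (((2:ℝ)*(m+1))⁻¹) := by
    have h := Real.log_le_rpow_div hx0 hε
    rwa [div_eq_mul_inv, inv_inv, mul_comm] at h
  calc |Real.log x| ^ m ≤ ((2*(m+1)) * x ^ (((2:ℝ)*(m+1))⁻¹)) ^ m := by
        rw [hlog]; exact pow_le_pow_left₀ (Real.log_nonneg hx) h1 m
    _ = (2*(m+1):ℝ)^m * (x ^ (((2:ℝ)*(m+1))⁻¹)) ^ m := by rw [mul_pow]
    _ = (2*(m+1):ℝ)^m * x ^ ((((2:ℝ)*(m+1))⁻¹) * m) := by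
        rw [← Real.rpow_natCast (x ^ (((2:ℝ)*(m+1))⁻¹)) m, ← Real.rpow_mul hx0]
    _ ≤ (2*(m+1):ℝ)^m * x ^ ((1:ℝ)/2) := by
        gcongr
        · rw [inv_mul_le_iff₀ (by positivity)]
          nlinarith [Nat.cast_nonneg (α := ℝ) m]

lemma log_pow_le' (m : ℕ) : ∃ C : ℝ, 0 ≤ C ∧ ∀ x : ℝ, 0 < x → x ≤ 1 →
    |Real.log x| ^ m ≤ C * x ^ (-(1:ℝ)/2) := by
  obtain ⟨C, hC0, hC⟩ := log_pow_le m
  refine ⟨C, hC0, fun x hx0 hx1 => ?_⟩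
  have h1 : (1:ℝ) ≤ x⁻¹ := by
    nlinarith [mul_nonneg (sub_nonneg.mpr hx1) (inv_pos.mpr hx0).le,
      mul_inv_cancel₀ hx0.ne']
  have h2 : |Real.log x| = |Real.log x⁻¹| := by rw [Real.log_inv, abs_neg]
  rw [h2]
  calc |Real.log x⁻¹| ^ m ≤ C * (x⁻¹) ^ ((1:ℝ)/2) := hC _ h1
    _ = C * x ^ (-(1:ℝ)/2) := by
        rw [Real.inv_rpow hx0.le, ← Real.rpow_neg hx0.le, neg_div]

end Stmt5Aux
namespace Stmt5Aux

lemma taylor_bound (p : ℕ) (φ : 𝓢(ℝ, ℂ)) : ∃ C : ℝ, 0 ≤ C ∧ ∀ x ∈ Set.Icc (0:ℝ) 1,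
    ‖φ x - ∑ j ∈ Finset.range (p+1), ((x:ℂ)^j / (j.factorial:ℂ)) * iteratedDeriv j (⇑φ) 0‖
      ≤ C * x ^ (p+1) := by
  have hsm : ContDiff ℝ (⊤:ℕ∞) ⇑φ := φ.smooth ⊤
  obtain ⟨C, hC⟩ := isCompact_Icc.exists_bound_of_continuousOn
    ((hsm.continuous_iteratedDeriv (p+1) (by exact_mod_cast le_top)).continuousOn
      (s := Set.Icc (0:ℝ) 1))
  have hC0 : 0 ≤ C := le_trans (norm_nonneg _) (hC 0 (by norm_num))
  refine ⟨C / (p.factorial), by positivity, fun x hx => ?_⟩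
  have htay := taylor_mean_remainder_bound (f := ⇑φ) (a := 0) (b := 1) (n := p) zero_le_one
    ((hsm.of_le (by exact_mod_cast le_top)).contDiffOn) hx
    (fun y hy => by rw [itdw_eq hsm _ hy]; exact hC y hy)
  have hsum : taylorWithinEval (⇑φ) p (Set.Icc (0:ℝ) 1) 0 x
      = ∑ j ∈ Finset.range (p+1), ((x:ℂ)^j / (j.factorial:ℂ)) * iteratedDeriv j (⇑φ) 0 := by
    rw [taylor_within_apply]
    refine Finset.sum_congr rfl (fun j _ => ?_)
    rw [itdw_eq hsm _ (by norm_num : (0:ℝ) ∈ Set.Icc (0:ℝ) 1)]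
    rw [Complex.real_smul]
    push_cast
    ring
  rw [hsum] at htay
  calc ‖φ x - ∑ j ∈ Finset.range (p+1), ((x:ℂ)^j / (j.factorial:ℂ)) * iteratedDeriv j (⇑φ) 0‖
      ≤ C * (x - 0) ^ (p+1) / (p.factorial) := htay
    _ = C / (p.factorial) * x ^ (p+1) := by ring

lemma schwartz_decay2 (φ : 𝓢(ℝ, ℂ)) : ∃ C : ℝ, 0 ≤ C ∧ ∀ x : ℝ, 1 ≤ x →
    ‖φ x‖ ≤ C * x ^ (-(2:ℝ)) := by
  obtain ⟨C, hC0, hC⟩ := φ.decay 2 0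
  refine ⟨C, hC0.le, fun x hx => ?_⟩
  have hx0 : (0:ℝ) < x := lt_of_lt_of_le one_pos hx
  have h := hC x
  rw [norm_iteratedFDeriv_zero] at h
  have hxx : ‖x‖ ^ 2 = x ^ (2:ℝ) := by
    rw [Real.norm_eq_abs, abs_of_pos hx0, ← Real.rpow_natCast]; norm_num
  rw [hxx] at h
  rw [Real.rpow_neg hx0.le, mul_comm C, inv_mul_eq_div, le_div_iff₀ (Real.rpow_pos_of_pos hx0 2)]
  rw [mul_comm] at h
  linarith

end Stmt5Aux
namespace Stmt5Aux

lemma ind_one {x : ℝ} (h0 : 0 ≤ x) (h1 : x ≤ 1) : ind x = 1 :=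
  Set.indicator_of_mem (Set.mem_Icc.mpr ⟨h0, h1⟩) _

lemma ind_zero {x : ℝ} (h1 : 1 < x) : ind x = 0 :=
  Set.indicator_of_notMem (fun h => absurd (Set.mem_Icc.mp h).2 (not_le.mpr h1)) _

lemma R_le_Ioc (p : ℕ) (φ : 𝓢(ℝ, ℂ)) : ∃ C : ℝ, 0 ≤ C ∧ ∀ x ∈ Set.Ioc (0:ℝ) 1,
    ‖R p φ x‖ ≤ C * x ^ ((p:ℝ)+1) := by
  obtain ⟨C, hC0, hC⟩ := taylor_bound p φ
  refine ⟨C, hC0, fun x hx => ?_⟩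
  have hR : R p φ x = φ x - ∑ j ∈ Finset.range (p+1),
      ((x:ℂ)^j / (j.factorial:ℂ)) * iteratedDeriv j (⇑φ) 0 := by
    unfold R
    rw [ind_one hx.1.le hx.2, Finset.sum_range_succ, mul_one]
    ring
  rw [hR]
  calc ‖_‖ ≤ C * x ^ (p+1) := hC x (Set.mem_Icc.mpr ⟨hx.1.le, hx.2⟩)
    _ = C * x ^ ((p:ℝ)+1) := by
        rw [← Real.rpow_natCast x (p+1)]; push_cast; ring_nf

lemma R_le_Ioi (p : ℕ) (φ : 𝓢(ℝ, ℂ)) : ∃ M : ℝ, 0 ≤ M ∧ ∀ x ∈ Set.Ioi (1:ℝ),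
    ‖R p φ x‖ ≤ M * x ^ ((p:ℝ)-1) := by
  obtain ⟨C, hC0, hC⟩ := schwartz_decay2 φ
  refine ⟨C + ∑ j ∈ Finset.range p, ‖iteratedDeriv j (⇑φ) 0‖ / (j.factorial), by positivity,
    fun x hx => ?_⟩
  have hx1 : (1:ℝ) < x := hx
  have hx0 : (0:ℝ) < x := lt_trans one_pos hx1
  have hR : R p φ x = φ x - ∑ j ∈ Finset.range p,
      ((x:ℂ)^j / (j.factorial:ℂ)) * iteratedDeriv j (⇑φ) 0 := by
    unfold R; rw [ind_zero hx1]; ring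
  rw [hR]
  have h1 : ‖φ x‖ ≤ C * x ^ ((p:ℝ)-1) := by
    calc ‖φ x‖ ≤ C * x ^ (-(2:ℝ)) := hC x hx1.le
      _ ≤ C * x ^ ((p:ℝ)-1) := by
          gcongr
          · exact hx1.le
          · have : (0:ℝ) ≤ (p:ℝ) := Nat.cast_nonneg p
            linarith
  have h2 : ‖∑ j ∈ Finset.range p, ((x:ℂ)^j / (j.factorial:ℂ)) * iteratedDeriv j (⇑φ) 0‖
      ≤ (∑ j ∈ Finset.range p, ‖iteratedDeriv j (⇑φ) 0‖ / (j.factorial)) * x ^ ((p:ℝ)-1) := by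
    rw [Finset.sum_mul]
    refine le_trans (norm_sum_le _ _) (Finset.sum_le_sum fun j hj => ?_)
    rw [norm_mul, norm_div, norm_pow]
    have hj' : (j:ℝ) ≤ (p:ℝ) - 1 := by
      have h := Finset.mem_range.mp hj
      have h' : ((j:ℝ) + 1) ≤ (p:ℝ) := by exact_mod_cast h
      linarith
    have hxj : ‖(x:ℂ)‖ ^ j ≤ x ^ ((p:ℝ)-1) := by
      rw [Complex.norm_real, Real.norm_eq_abs, abs_of_pos hx0, ← Real.rpow_natCast x j]
      exact Real.rpow_le_rpow_of_exponent_le hx1.le hj'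
    have hfac : ‖((j.factorial : ℂ))‖ = (j.factorial : ℝ) := by
      rw [show ((j.factorial : ℂ)) = ((j.factorial : ℝ) : ℂ) by push_cast; rfl,
        Complex.norm_real, Real.norm_eq_abs, abs_of_pos (by positivity)]
    rw [hfac]
    calc ‖(x:ℂ)‖ ^ j / (j.factorial:ℝ) * ‖iteratedDeriv j (⇑φ) 0‖
        ≤ x ^ ((p:ℝ)-1) / (j.factorial:ℝ) * ‖iteratedDeriv j (⇑φ) 0‖ := by
          gcongr
      _ = ‖iteratedDeriv j (⇑φ) 0‖ / (j.factorial:ℝ) * x ^ ((p:ℝ)-1) := by ring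
  calc ‖φ x - _‖ ≤ ‖φ x‖ + ‖∑ j ∈ Finset.range p, ((x:ℂ)^j / (j.factorial:ℂ)) * iteratedDeriv j (⇑φ) 0‖ := norm_sub_le _ _
    _ ≤ C * x ^ ((p:ℝ)-1) + (∑ j ∈ Finset.range p, ‖iteratedDeriv j (⇑φ) 0‖ / (j.factorial)) * x ^ ((p:ℝ)-1) := add_le_add h1 h2
    _ = _ := by ring

end Stmt5Aux
namespace Stmt5Aux

lemma ind_meas : Measurable ind :=
  Measurable.indicator measurable_const measurableSet_Icc

lemma R_meas (p : ℕ) (φ : 𝓢(ℝ, ℂ)) : Measurable (R p φ) := by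
  unfold R
  apply Measurable.sub
  apply Measurable.sub φ.continuous.measurable
  · exact Finset.measurable_sum _ (fun j _ =>
      ((Complex.measurable_ofReal.pow_const j).div_const _).mul_const _)
  · exact (((Complex.measurable_ofReal.pow_const p).div_const _).mul_const _).mul ind_meas

lemma g_meas (p m : ℕ) (φ : 𝓢(ℝ, ℂ)) : Measurable (g p m φ) := by
  unfold g
  have h1 : Measurable fun x : ℝ => (x:ℂ)^(-((p:ℤ)+1)) := by
    have he : (fun x : ℝ => (x:ℂ)^(-((p:ℤ)+1))) = fun x : ℝ => ((x:ℂ)^(p+1))⁻¹ := by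
      funext x
      rw [← zpow_natCast (x:ℂ) (p+1), ← zpow_neg]
      norm_num
    rw [he]
    exact (Complex.measurable_ofReal.pow_const _).inv
  exact (h1.mul ((Complex.measurable_ofReal.comp Real.measurable_log).pow_const m)).mul
    (R_meas p φ)

lemma norm_g (p m : ℕ) (φ : 𝓢(ℝ, ℂ)) {x : ℝ} (hx : 0 < x) :
    ‖g p m φ x‖ = x ^ (-((p:ℝ)+1)) * |Real.log x| ^ m * ‖R p φ x‖ := by
  unfold g
  rw [norm_mul, norm_mul, norm_zpow, norm_pow, Complex.norm_real, Real.norm_eq_abs,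
    Complex.norm_real, Real.norm_eq_abs, abs_of_pos hx]
  congr 2
  rw [← Real.rpow_intCast x (-((p:ℤ)+1))]
  push_cast
  ring_nf

lemma g_integrableOn (p m : ℕ) (φ : 𝓢(ℝ, ℂ)) :
    MeasureTheory.IntegrableOn (g p m φ) (Set.Ioi (0:ℝ)) := by
  rw [← Set.Ioc_union_Ioi_eq_Ioi (zero_le_one : (0:ℝ) ≤ 1)]
  refine MeasureTheory.IntegrableOn.union ?_ ?_
  · -- on Ioc 0 1
    obtain ⟨C, hC0, hC⟩ := R_le_Ioc p φ
    obtain ⟨C', hC'0, hC'⟩ := log_pow_le' m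
    have hbound : MeasureTheory.IntegrableOn
        (fun x : ℝ => (C * C') * x ^ (-(1:ℝ)/2)) (Set.Ioc (0:ℝ) 1) := by
      refine MeasureTheory.Integrable.const_mul ?_ _
      exact (intervalIntegrable_iff_integrableOn_Ioc_of_le zero_le_one).mp
        (intervalIntegral.intervalIntegrable_rpow' (by norm_num))
    refine MeasureTheory.Integrable.mono' hbound
      ((g_meas p m φ).aestronglyMeasurable) ?_
    rw [MeasureTheory.ae_restrict_iff' measurableSet_Ioc]
    refine Filter.Eventually.of_forall (fun x hx => ?_)
    have hx0 : 0 < x := hx.1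
    have key : x ^ (-((p:ℝ)+1)) * x ^ ((p:ℝ)+1) = 1 := by
      rw [← Real.rpow_add hx0, show -((p:ℝ)+1) + ((p:ℝ)+1) = 0 by ring, Real.rpow_zero]
    rw [norm_g p m φ hx0]
    calc x ^ (-((p:ℝ)+1)) * |Real.log x| ^ m * ‖R p φ x‖
        ≤ x ^ (-((p:ℝ)+1)) * (C' * x ^ (-(1:ℝ)/2)) * (C * x ^ ((p:ℝ)+1)) := by
          have h1 := hC' x hx0 hx.2
          have h2 := hC x hx
          gcongr
      _ = (C * C') * ((x ^ (-((p:ℝ)+1)) * x ^ ((p:ℝ)+1)) * x ^ (-(1:ℝ)/2)) := by ring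
      _ = (C * C') * x ^ (-(1:ℝ)/2) := by rw [key, one_mul]
  · -- on Ioi 1
    obtain ⟨M, hM0, hM⟩ := R_le_Ioi p φ
    obtain ⟨C', hC'0, hC'⟩ := log_pow_le m
    have hbound : MeasureTheory.IntegrableOn
        (fun x : ℝ => (M * C') * x ^ (-(3:ℝ)/2)) (Set.Ioi (1:ℝ)) := by
      refine MeasureTheory.Integrable.const_mul ?_ _
      exact integrableOn_Ioi_rpow_of_lt (by norm_num) one_pos
    refine MeasureTheory.Integrable.mono' hbound
      ((g_meas p m φ).aestronglyMeasurable) ?_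
    rw [MeasureTheory.ae_restrict_iff' measurableSet_Ioi]
    refine Filter.Eventually.of_forall (fun x hx => ?_)
    have hx1 : (1:ℝ) < x := hx
    have hx0 : 0 < x := lt_trans one_pos hx1
    have key : x ^ (-((p:ℝ)+1)) * x ^ ((1:ℝ)/2) * x ^ ((p:ℝ)-1) = x ^ (-(3:ℝ)/2) := by
      rw [← Real.rpow_add hx0, ← Real.rpow_add hx0,
        show -((p:ℝ)+1) + (1:ℝ)/2 + ((p:ℝ)-1) = -(3:ℝ)/2 by ring]
    rw [norm_g p m φ hx0]
    calc x ^ (-((p:ℝ)+1)) * |Real.log x| ^ m * ‖R p φ x‖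
        ≤ x ^ (-((p:ℝ)+1)) * (C' * x ^ ((1:ℝ)/2)) * (M * x ^ ((p:ℝ)-1)) := by
          have h1 := hC' x hx1.le
          have h2 := hM x hx
          gcongr
      _ = (M * C') * (x ^ (-((p:ℝ)+1)) * x ^ ((1:ℝ)/2) * x ^ ((p:ℝ)-1)) := by ring
      _ = (M * C') * x ^ (-(3:ℝ)/2) := by rw [key]

end Stmt5Aux
namespace Stmt5Aux

lemma iteratedDeriv_comp_const_mul {f : ℝ → ℂ} (hf : ContDiff ℝ (⊤:ℕ∞) f) (c : ℝ) (j : ℕ) :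
    ∀ x : ℝ, iteratedDeriv j (fun y => f (c * y)) x = c ^ j • iteratedDeriv j f (c * x) := by
  induction j with
  | zero => intro x; simp
  | succ j ih =>
    intro x
    rw [iteratedDeriv_succ]
    have hrw : (deriv fun y => iteratedDeriv j (fun z => f (c * z)) y)
        = deriv (fun y => c ^ j • iteratedDeriv j f (c * y)) := by
      funext y; congr 1; funext z; exact ih z
    have hdiff : DifferentiableAt ℝ (iteratedDeriv j f) (c * x) := by
      have := hf.differentiable_iteratedDeriv j (by exact_mod_cast lt_top_iff_ne_top.mpr (by simp) : ((j:ℕ∞) : WithTop ℕ∞) < ((⊤:ℕ∞) : WithTop ℕ∞))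
      exact this.differentiableAt
    have hd : HasDerivAt (iteratedDeriv j f) (iteratedDeriv (j+1) f (c * x)) (c * x) := by
      rw [iteratedDeriv_succ]
      exact hdiff.hasDerivAt
    have hcomp : HasDerivAt (fun y : ℝ => iteratedDeriv j f (c * y))
        (c • iteratedDeriv (j+1) f (c * x)) x := by
      have hin : HasDerivAt (fun y : ℝ => c * y) c x := by
        simpa using (hasDerivAt_id x).const_mul c
      exact hd.scomp x hin
    have : HasDerivAt (fun y : ℝ => c ^ j • iteratedDeriv j f (c * y))
        (c ^ j • (c • iteratedDeriv (j+1) f (c * x))) x := hcomp.const_smul (c ^ j)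
    rw [show (iteratedDeriv j fun y => f (c * y)) = fun y => iteratedDeriv j (fun z => f (c*z)) y from rfl,
      hrw, this.deriv, smul_smul, pow_succ]

lemma dilate_iteratedDeriv (a : ℝ) (ha : 0 < a) (φ : 𝓢(ℝ, ℂ)) (j : ℕ) :
    iteratedDeriv j (⇑(dilate a φ)) 0 = ((a:ℂ)⁻¹) ^ j * iteratedDeriv j (⇑φ) 0 := by
  have hfun : ⇑(dilate a φ) = fun x : ℝ => φ (a⁻¹ * x) := by
    funext x
    rw [dilate_apply a ha.ne' φ x, smul_eq_mul]
  rw [hfun, iteratedDeriv_comp_const_mul (φ.smooth ⊤) a⁻¹ j 0, mul_zero, Complex.real_smul]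
  push_cast
  ring
end Stmt5Aux
namespace Stmt5Aux

lemma indicator_Ioc_eq (s t y : ℝ) :
    Set.indicator (Set.Ioc s t) (fun _ => (1:ℂ)) y = if s < y ∧ y ≤ t then 1 else 0 := by
  simp [Set.indicator_apply, Set.mem_Ioc]

lemma chi_eq {c : ℝ} (hc : 0 < c) (y : ℝ) :
    Set.indicator (Set.Ioc (0:ℝ) c) (fun _ => (1:ℂ)) y
      - Set.indicator (Set.Ioc (0:ℝ) 1) (fun _ => (1:ℂ)) y
    = Set.indicator (Set.Ioc (1:ℝ) c) (fun _ => (1:ℂ)) y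
      - Set.indicator (Set.Ioc c (1:ℝ)) (fun _ => (1:ℂ)) y := by
  simp only [indicator_Ioc_eq]
  split_ifs
  all_goals try norm_num
  all_goals exfalso
  all_goals simp only [not_and_or, not_lt, not_le] at *
  all_goals casesm* _ ∨ _, _ ∧ _
  all_goals linarith

end Stmt5Aux
namespace Stmt5Aux

lemma Df_contOn (L : ℝ) (k : ℕ) {s : Set ℝ} (hs : ∀ y ∈ s, (0:ℝ) < y) :
    ContinuousOn (fun y : ℝ => ((L:ℂ) + (Real.log y : ℂ))^k * ((y:ℂ))⁻¹) s := by
  apply ContinuousOn.mul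
  · apply ContinuousOn.pow
    apply ContinuousOn.add continuousOn_const
    exact Complex.continuous_ofReal.comp_continuousOn
      (Real.continuousOn_log.mono (fun y hy => ne_of_gt (hs y hy)))
  · exact ContinuousOn.inv₀ (Complex.continuous_ofReal.continuousOn)
      (fun y hy => Complex.ofReal_ne_zero.mpr (ne_of_gt (hs y hy)))

lemma FTC (L : ℝ) (k : ℕ) {c : ℝ} (hc : 0 < c) (hLc : Real.log c = -L) :
    ∫ y in (1:ℝ)..c, ((L:ℂ) + (Real.log y : ℂ))^k * ((y:ℂ))⁻¹
      = -(L:ℂ)^(k+1)/((k:ℂ)+1) := by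
  have hs : ∀ y ∈ Set.uIcc (1:ℝ) c, (0:ℝ) < y := by
    intro y hy
    rcases Set.mem_uIcc.mp hy with h | h
    · linarith [h.1]
    · linarith [h.1, hc]
  have hF : ∀ y ∈ Set.uIcc (1:ℝ) c,
      HasDerivAt (fun y : ℝ => ((L:ℂ) + (Real.log y : ℂ))^(k+1)/((k:ℂ)+1))
        (((L:ℂ) + (Real.log y : ℂ))^k * ((y:ℂ))⁻¹) y := by
    intro y hy
    have hy0 : (0:ℝ) < y := hs y hy
    have h1 : HasDerivAt (fun y : ℝ => L + Real.log y) y⁻¹ y :=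
      (Real.hasDerivAt_log hy0.ne').const_add L
    have h2 := h1.ofReal_comp
    have hpow : HasDerivAt (fun z : ℂ => z^(k+1))
        (((k:ℂ)+1) * ((L + Real.log y : ℝ) : ℂ)^k) (((L + Real.log y : ℝ) : ℂ)) := by
      have := hasDerivAt_pow (k+1) (((L + Real.log y : ℝ) : ℂ))
      simpa using this
    have h3 := ((hpow.scomp y h2).div_const ((k:ℂ)+1))
    simp only [Complex.ofReal_add] at h3
    have hk : ((k:ℂ)+1) ≠ 0 := Nat.cast_add_one_ne_zero k
    convert h3 using 1
    · rfl
    · rfl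
    rw [smul_eq_mul, Complex.ofReal_inv, mul_div_assoc, mul_div_cancel_left₀ _ hk, mul_comm]
  have hInt : IntervalIntegrable (fun y : ℝ => ((L:ℂ) + (Real.log y : ℂ))^k * ((y:ℂ))⁻¹)
      MeasureTheory.volume 1 c := (Df_contOn L k hs).intervalIntegrable
  rw [intervalIntegral.integral_eq_sub_of_hasDerivAt hF hInt, hLc, Real.log_one]
  push_cast
  rw [add_neg_cancel, zero_pow (Nat.succ_ne_zero k)]
  ring

end Stmt5Aux
/-- the regularized functional `F_k` applied to the dilated
function `x ↦ φ(x/a)` satisfies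
`F_k(φ(·/a)) = a^(−n+1) [ ∑_{r=0}^{k} (k choose r)(log a)^r F_{k−r}(φ)
  + ((log a)^(k+1)/((k+1)(n−1)!)) φ^(n−1)(0) ]`. -/
theorem stmt_5 (n : ℕ) (hn : 1 ≤ n) (k : ℕ) (φ : 𝓢(ℝ, ℂ)) (a : ℝ) (ha : 0 < a) :
    Freg n k (dilate a φ)
      = (a : ℂ) ^ ((1 : ℤ) - n) *
          ((∑ r ∈ Finset.range (k + 1),
              (k.choose r : ℂ) * (Real.log a : ℂ) ^ r * Freg n (k - r) φ)
            + (Real.log a : ℂ) ^ (k + 1) / (((k : ℂ) + 1) * ((n - 1).factorial : ℂ)) *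
                iteratedDeriv (n - 1) (⇑φ) 0) := by
  obtain ⟨p, rfl⟩ : ∃ p, n = p + 1 := ⟨n - 1, (Nat.succ_pred_eq_of_pos hn).symm⟩
  simp only [Nat.add_sub_cancel]
  have ha' : (a:ℂ) ≠ 0 := Complex.ofReal_ne_zero.mpr ha.ne'
  have hainv : (0:ℝ) < a⁻¹ := inv_pos.mpr ha
  set L : ℝ := Real.log a with hLdef
  set d : ℂ := iteratedDeriv p (⇑φ) 0 with hd
  -- the dilated integrand
  set G : ℝ → ℂ := fun x => (x:ℂ)^(-((p:ℤ)+1)) * (Real.log x : ℂ)^k *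
    ((φ (a⁻¹ * x)) - (∑ j ∈ Finset.range p, ((x:ℂ)^j/(j.factorial:ℂ)) *
        (((a:ℂ)⁻¹)^j * iteratedDeriv j (⇑φ) 0))
      - ((x:ℂ)^p/(p.factorial:ℂ)) * (((a:ℂ)⁻¹)^p * d) * Stmt5Aux.ind x) with hG
  have h1 : Freg (p+1) k (dilate a φ) = ∫ x in Set.Ioi (0:ℝ), G x := by
    unfold Freg
    simp only [Nat.add_sub_cancel]
    refine MeasureTheory.setIntegral_congr_fun measurableSet_Ioi (fun x _ => ?_)
    simp only [hG, Stmt5Aux.ind, Stmt5Aux.dilate_iteratedDeriv a ha φ]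
    rw [dilate_apply a ha.ne' φ x, smul_eq_mul]
    norm_num
    exact Or.inl (Or.inl (Or.inl (Or.inl rfl)))
  have h2 : (∫ x in Set.Ioi (0:ℝ), G x) = a • ∫ y in Set.Ioi (0:ℝ), G (a*y) := by
    rw [MeasureTheory.integral_comp_mul_left_Ioi G 0 ha, mul_zero, smul_smul,
      mul_inv_cancel₀ ha.ne', one_smul]
  set H : ℝ → ℂ := fun y => ∑ r ∈ Finset.range (k+1),
    (k.choose r : ℂ) * (L:ℂ)^r * Stmt5Aux.g p (k-r) φ y with hH
  set Df : ℝ → ℂ := fun y => ((L:ℂ) + (Real.log y : ℂ))^k * ((y:ℂ))⁻¹ with hDf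
  set χ : ℝ → ℂ := fun y => Set.indicator (Set.Ioc (0:ℝ) a⁻¹) (fun _ => (1:ℂ)) y
    - Set.indicator (Set.Ioc (0:ℝ) 1) (fun _ => (1:ℂ)) y with hχ
  set E : ℂ := -(d/(p.factorial:ℂ)) with hE
  have h3 : ∀ y ∈ Set.Ioi (0:ℝ), G (a*y)
      = (a:ℂ)^(-((p:ℤ)+1)) * (H y + E * (Df y * χ y)) := by
    intro y hy
    have hy0 : (0:ℝ) < y := hy
    have hyne : (y:ℂ) ≠ 0 := Complex.ofReal_ne_zero.mpr hy0.ne'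
    have e1 : a⁻¹ * (a*y) = y := by field_simp
    have e2 : Real.log (a*y) = L + Real.log y := Real.log_mul ha.ne' hy0.ne'
    have e3 : Stmt5Aux.ind (a*y) = Set.indicator (Set.Ioc (0:ℝ) a⁻¹) (fun _ => (1:ℂ)) y := by
      unfold Stmt5Aux.ind
      rcases le_or_gt y a⁻¹ with hc | hc
      · have hm1 : a*y ∈ Set.Icc (0:ℝ) 1 := Set.mem_Icc.mpr ⟨by positivity, by
          calc a * y ≤ a * a⁻¹ := by
                exact mul_le_mul_of_nonneg_left hc ha.le
            _ = 1 := mul_inv_cancel₀ ha.ne'⟩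
        have hm2 : y ∈ Set.Ioc (0:ℝ) a⁻¹ := Set.mem_Ioc.mpr ⟨hy0, hc⟩
        rw [Set.indicator_of_mem hm1, Set.indicator_of_mem hm2]
      · have hm1 : a*y ∉ Set.Icc (0:ℝ) 1 := by
          intro hmem
          have h2' := (Set.mem_Icc.mp hmem).2
          have : 1 < a * y := by
            calc 1 = a * a⁻¹ := (mul_inv_cancel₀ ha.ne').symm
              _ < a * y := by exact mul_lt_mul_of_pos_left hc ha
          linarith
        have hm2 : y ∉ Set.Ioc (0:ℝ) a⁻¹ := by
          intro hmem
          exact absurd (Set.mem_Ioc.mp hmem).2 (not_le.mpr hc)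
        rw [Set.indicator_of_notMem hm1, Set.indicator_of_notMem hm2]
    have e4 : Stmt5Aux.ind y = Set.indicator (Set.Ioc (0:ℝ) 1) (fun _ => (1:ℂ)) y := by
      unfold Stmt5Aux.ind
      rcases le_or_gt y 1 with hc | hc
      · rw [Set.indicator_of_mem (Set.mem_Icc.mpr ⟨hy0.le, hc⟩),
          Set.indicator_of_mem (Set.mem_Ioc.mpr ⟨hy0, hc⟩)]
      · rw [Set.indicator_of_notMem (fun h => absurd (Set.mem_Icc.mp h).2 (not_le.mpr hc)),
          Set.indicator_of_notMem (fun h => absurd (Set.mem_Ioc.mp h).2 (not_le.mpr hc))]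
    have hcan : ∀ j : ℕ, (a:ℂ)^j * ((a:ℂ)⁻¹)^j = 1 := fun j => by
      rw [← mul_pow, mul_inv_cancel₀ ha', one_pow]
    simp only [hG]
    rw [e1, e2, e3]
    simp only [Complex.ofReal_mul, Complex.ofReal_add]
    rw [mul_zpow]
    have eS : ∑ j ∈ Finset.range p, (((a:ℂ)*(y:ℂ))^j/(j.factorial:ℂ)) *
        (((a:ℂ)⁻¹)^j * iteratedDeriv j (⇑φ) 0)
        = ∑ j ∈ Finset.range p, ((y:ℂ)^j/(j.factorial:ℂ)) * iteratedDeriv j (⇑φ) 0 := by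
      refine Finset.sum_congr rfl (fun j _ => ?_)
      calc ((a:ℂ)*(y:ℂ))^j/(j.factorial:ℂ) * (((a:ℂ)⁻¹)^j * iteratedDeriv j (⇑φ) 0)
          = ((a:ℂ)^j * ((a:ℂ)⁻¹)^j) * ((y:ℂ)^j/(j.factorial:ℂ) * iteratedDeriv j (⇑φ) 0) := by
            rw [mul_pow]; ring
        _ = ((y:ℂ)^j/(j.factorial:ℂ)) * iteratedDeriv j (⇑φ) 0 := by rw [hcan j, one_mul]
    rw [eS]
    have eP : ((a:ℂ)*(y:ℂ))^p/(p.factorial:ℂ) * (((a:ℂ)⁻¹)^p * d)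
        = ((y:ℂ)^p/(p.factorial:ℂ)) * d := by
      calc ((a:ℂ)*(y:ℂ))^p/(p.factorial:ℂ) * (((a:ℂ)⁻¹)^p * d)
          = ((a:ℂ)^p * ((a:ℂ)⁻¹)^p) * ((y:ℂ)^p/(p.factorial:ℂ) * d) := by
            rw [mul_pow]; ring
        _ = ((y:ℂ)^p/(p.factorial:ℂ)) * d := by rw [hcan p, one_mul]
    rw [eP]
    have ey : (y:ℂ)^(-((p:ℤ)+1)) * (y:ℂ)^p = ((y:ℂ))⁻¹ := by
      rw [← zpow_natCast (y:ℂ) p, ← zpow_add₀ hyne,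
        show -((p:ℤ)+1) + (p:ℤ) = -1 by ring, zpow_neg_one]
    have key : (y:ℂ)^(-((p:ℤ)+1)) * ((L:ℂ)+(Real.log y:ℂ))^k *
        (φ y - (∑ j ∈ Finset.range p, ((y:ℂ)^j/(j.factorial:ℂ)) * iteratedDeriv j (⇑φ) 0)
          - ((y:ℂ)^p/(p.factorial:ℂ)) * d * Set.indicator (Set.Ioc (0:ℝ) a⁻¹) (fun _ => (1:ℂ)) y)
        = H y + E * (Df y * χ y) := by
      have hsplit : Set.indicator (Set.Ioc (0:ℝ) a⁻¹) (fun _ => (1:ℂ)) y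
          = Set.indicator (Set.Ioc (0:ℝ) 1) (fun _ => (1:ℂ)) y + χ y := by
        simp only [hχ]; ring
      rw [hsplit]
      have hHy : (y:ℂ)^(-((p:ℤ)+1)) * ((L:ℂ)+(Real.log y:ℂ))^k * Stmt5Aux.R p φ y = H y := by
        simp only [hH]
        rw [add_pow, Finset.mul_sum, Finset.sum_mul]
        refine Finset.sum_congr rfl (fun r hr => ?_)
        simp only [Stmt5Aux.g]
        ring
      have hTy : (y:ℂ)^(-((p:ℤ)+1)) * ((L:ℂ)+(Real.log y:ℂ))^k *
          (((y:ℂ)^p/(p.factorial:ℂ)) * d * χ y) = -(E * (Df y * χ y)) := by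
        simp only [hE, hDf]
        calc (y:ℂ)^(-((p:ℤ)+1)) * ((L:ℂ)+(Real.log y:ℂ))^k *
            (((y:ℂ)^p/(p.factorial:ℂ)) * d * χ y)
            = (d/(p.factorial:ℂ)) * (((L:ℂ)+(Real.log y:ℂ))^k *
              ((y:ℂ)^(-((p:ℤ)+1)) * (y:ℂ)^p) * χ y) := by ring
          _ = -(-(d/(p.factorial:ℂ)) * ((((L:ℂ)+(Real.log y:ℂ))^k * ((y:ℂ))⁻¹) * χ y)) := by
              rw [ey]; ring
      have hRdef : Stmt5Aux.R p φ y = φ y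
          - (∑ j ∈ Finset.range p, ((y:ℂ)^j/(j.factorial:ℂ)) * iteratedDeriv j (⇑φ) 0)
          - ((y:ℂ)^p/(p.factorial:ℂ)) * d *
              Set.indicator (Set.Ioc (0:ℝ) 1) (fun _ => (1:ℂ)) y := by
        unfold Stmt5Aux.R
        rw [← e4, hd]
      rw [show φ y - (∑ j ∈ Finset.range p, ((y:ℂ)^j/(j.factorial:ℂ)) * iteratedDeriv j (⇑φ) 0)
          - ((y:ℂ)^p/(p.factorial:ℂ)) * d *
            (Set.indicator (Set.Ioc (0:ℝ) 1) (fun _ => (1:ℂ)) y + χ y)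
          = Stmt5Aux.R p φ y - ((y:ℂ)^p/(p.factorial:ℂ)) * d * χ y from by rw [hRdef]; ring]
      linear_combination hHy - hTy
    linear_combination (a:ℂ)^(-((p:ℤ)+1)) * key
  -- integrability
  have hgint : ∀ m, MeasureTheory.IntegrableOn (Stmt5Aux.g p m φ) (Set.Ioi (0:ℝ)) :=
    fun m => Stmt5Aux.g_integrableOn p m φ
  have hHint : MeasureTheory.IntegrableOn H (Set.Ioi (0:ℝ)) := by
    simp only [hH]
    exact MeasureTheory.integrable_finset_sum _ (fun r _ => ((hgint (k-r)).const_mul _))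
  have hs : ∀ y ∈ Set.uIcc (1:ℝ) a⁻¹, (0:ℝ) < y := by
    intro y hy
    rcases Set.mem_uIcc.mp hy with h | h
    · linarith [h.1]
    · linarith [h.1, hainv]
  have hI1 : IntervalIntegrable Df MeasureTheory.volume 1 a⁻¹ := by
    rw [hDf]; exact (Stmt5Aux.Df_contOn L k hs).intervalIntegrable
  have hprod : ∀ y : ℝ, Df y * χ y = Set.indicator (Set.Ioc (1:ℝ) a⁻¹) Df y
      - Set.indicator (Set.Ioc a⁻¹ (1:ℝ)) Df y := by
    intro y
    have := Stmt5Aux.chi_eq hainv y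
    simp only [hχ, this]
    simp only [Set.indicator_apply]
    split_ifs <;> ring
  have hind1 : MeasureTheory.IntegrableOn (Set.indicator (Set.Ioc (1:ℝ) a⁻¹) Df)
      (Set.Ioi (0:ℝ)) :=
    (hI1.1.integrable_indicator measurableSet_Ioc).integrableOn
  have hind2 : MeasureTheory.IntegrableOn (Set.indicator (Set.Ioc a⁻¹ (1:ℝ)) Df)
      (Set.Ioi (0:ℝ)) :=
    (hI1.2.integrable_indicator measurableSet_Ioc).integrableOn
  have hDχint : MeasureTheory.IntegrableOn (fun y => E * (Df y * χ y)) (Set.Ioi (0:ℝ)) := by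
    have h : MeasureTheory.IntegrableOn (fun y => Df y * χ y) (Set.Ioi (0:ℝ)) := by
      rw [show (fun y => Df y * χ y) = fun y => Set.indicator (Set.Ioc (1:ℝ) a⁻¹) Df y
        - Set.indicator (Set.Ioc a⁻¹ (1:ℝ)) Df y from funext hprod]
      exact hind1.sub hind2
    exact h.const_mul E
  -- evaluate the two integrals
  have hHval : (∫ y in Set.Ioi (0:ℝ), H y)
      = ∑ r ∈ Finset.range (k+1), (k.choose r : ℂ) * (L:ℂ)^r * Freg (p+1) (k-r) φ := by
    simp only [hH]
    rw [MeasureTheory.integral_finset_sum _ (fun r _ => ((hgint (k-r)).const_mul _))]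
    refine Finset.sum_congr rfl (fun r hr => ?_)
    rw [MeasureTheory.integral_const_mul, Stmt5Aux.Freg_eq]
  have hDval : (∫ y in Set.Ioi (0:ℝ), E * (Df y * χ y))
      = (L:ℂ)^(k+1)/(((k:ℂ)+1)*(p.factorial:ℂ)) * d := by
    rw [MeasureTheory.integral_const_mul]
    have hχint : (∫ y in Set.Ioi (0:ℝ), Df y * χ y) = -(L:ℂ)^(k+1)/((k:ℂ)+1) := by
      simp only [hprod]
      have hsub1 : Set.Ioi (0:ℝ) ∩ Set.Ioc (1:ℝ) a⁻¹ = Set.Ioc (1:ℝ) a⁻¹ :=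
        Set.inter_eq_self_of_subset_right
          (fun y hy => Set.mem_Ioi.mpr (lt_trans one_pos (Set.mem_Ioc.mp hy).1))
      have hsub2 : Set.Ioi (0:ℝ) ∩ Set.Ioc a⁻¹ (1:ℝ) = Set.Ioc a⁻¹ (1:ℝ) :=
        Set.inter_eq_self_of_subset_right
          (fun y hy => Set.mem_Ioi.mpr (lt_trans hainv (Set.mem_Ioc.mp hy).1))
      rw [MeasureTheory.integral_sub hind1 hind2,
        MeasureTheory.setIntegral_indicator measurableSet_Ioc,
        MeasureTheory.setIntegral_indicator measurableSet_Ioc, hsub1, hsub2]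
      have hiv : (∫ y in (1:ℝ)..a⁻¹, Df y)
          = (∫ y in Set.Ioc (1:ℝ) a⁻¹, Df y) - ∫ y in Set.Ioc a⁻¹ (1:ℝ), Df y := rfl
      rw [← hiv, hDf]
      exact Stmt5Aux.FTC L k hainv (by rw [Real.log_inv])
    rw [hχint, hE]
    have hk : ((k:ℂ)+1) ≠ 0 := Nat.cast_add_one_ne_zero k
    have hp : ((p.factorial:ℂ)) ≠ 0 := Nat.cast_ne_zero.mpr p.factorial_ne_zero
    field_simp
  rw [h1, h2, MeasureTheory.setIntegral_congr_fun measurableSet_Ioi h3,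
    MeasureTheory.integral_const_mul,
    MeasureTheory.integral_add hHint hDχint, hHval, hDval, Complex.real_smul]
  rw [show ((1:ℤ) - ((p:ℕ)+1:ℕ)) = 1 + (-((p:ℤ)+1)) by push_cast; ring,
    zpow_add₀ ha', zpow_one, mul_assoc]

end
end

section
/- Let λ ∈ ℂ. Let f₀ and g₀ be tempered distributions on ℝ, homogeneous of degree λ, and let f₁ be a tempered distribution on ℝ such that ⟨f₁, φ(·/a)⟩ = a^{λ+1}(⟨f₁, φ⟩ + (log a)⟨g₀, φ⟩) for every a > 0 and every Schwartz φ. Let H₁, H₂ : (0,∞) → ℂ be differentiable functions, and suppose f₂ is a tempered distribution on ℝ satisfying ⟨f₂, φ(·/a)⟩ = a^{λ+1}⟨f₂, φ⟩ + H₁(a)⟨f₁, φ⟩ + H₂(a)⟨f₀, φ⟩ for every a > 0 and every Schwartz φ. Then there exist tempered distributions f̃₁, f̃₀, g̃₀ on ℝ such that f̃₀ and g̃₀ are homogeneous of degree λ, ⟨f̃₁, φ(·/a)⟩ = a^{λ+1}(⟨f̃₁, φ⟩ + (log a)⟨g̃₀, φ⟩) for every a > 0 and Schwartz φ, and ⟨f₂,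 φ(·/a)⟩ = a^{λ+1}( ⟨f₂, φ⟩ + (log a)⟨f̃₁, φ⟩ + (log a)²⟨f̃₀, φ⟩ ) for every a > 0 and every Schwartz φ. -/
open MeasureTheory SchwartzMap Complex Finset

noncomputable section

variable {E : Type*} [NormedAddCommGroup E] [NormedSpace ℝ E]

/-- A continuous additive map `ℝ → ℂ` is linear. -/
lemma cauchy_aux (m : ℝ → ℂ) (hc : Continuous m)
    (ha : ∀ s t, m (s + t) = m s + m t) (t : ℝ) : m t = t * m 1 := by
  have h := ((AddMonoidHom.mk' m ha).toRealLinearMap hc).map_smul t (1 : ℝ)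
  have h' : m (t • (1 : ℝ)) = t • m 1 := h
  simpa [AddMonoidHom.coe_toRealLinearMap, Complex.real_smul] using h'

lemma dilate_comp (a b : ℝ) (ha : a ≠ 0) (hb : b ≠ 0) (φ : 𝓢(ℝ, ℂ)) :
    dilate a (dilate b φ) = dilate (a * b) φ := by
  ext x
  rw [dilate_apply_real a ha, dilate_apply_real b hb,
    dilate_apply_real _ (mul_ne_zero ha hb), div_div]

/-- if `f₂` satisfies `⟨f₂, φ(·/a)⟩ = a^(λ+1)⟨f₂, φ⟩ + H₁(a)⟨f₁, φ⟩ + H₂(a)⟨f₀, φ⟩`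
with `f₀` homogeneous of degree `λ`, `f₁` an AHD of order 1 with homogeneous component `g₀`,
and `H₁, H₂` differentiable on `(0,∞)`, then `f₂` obeys the canonical order-2 expansion
`⟨f₂, φ(·/a)⟩ = a^(λ+1)(⟨f₂, φ⟩ + (log a)⟨f̃₁, φ⟩ + (log a)²⟨f̃₀, φ⟩)`. -/
theorem stmt_12 (lam : ℂ) (f₀ g₀ f₁ f₂ : 𝓢(ℝ, ℂ) →L[ℂ] ℂ)
    (hf₀ : IsHomogeneous lam f₀) (hg₀ : IsHomogeneous lam g₀)
    (hf₁ : ∀ a : ℝ, 0 < a → ∀ φ : 𝓢(ℝ, ℂ),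
      f₁ (dilate a φ) = (a : ℂ) ^ (lam + 1) * (f₁ φ + (Real.log a : ℂ) * g₀ φ))
    (H₁ H₂ : ℝ → ℂ)
    (hH₁ : ∀ a : ℝ, 0 < a → DifferentiableAt ℝ H₁ a)
    (hH₂ : ∀ a : ℝ, 0 < a → DifferentiableAt ℝ H₂ a)
    (hf₂ : ∀ a : ℝ, 0 < a → ∀ φ : 𝓢(ℝ, ℂ),
      f₂ (dilate a φ) = (a : ℂ) ^ (lam + 1) * f₂ φ + H₁ a * f₁ φ + H₂ a * f₀ φ) :
    ∃ F₁ F₀ G₀ : 𝓢(ℝ, ℂ) →L[ℂ] ℂ,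
      IsHomogeneous lam F₀ ∧ IsHomogeneous lam G₀ ∧
      (∀ a : ℝ, 0 < a → ∀ φ : 𝓢(ℝ, ℂ),
        F₁ (dilate a φ) = (a : ℂ) ^ (lam + 1) * (F₁ φ + (Real.log a : ℂ) * G₀ φ)) ∧
      (∀ a : ℝ, 0 < a → ∀ φ : 𝓢(ℝ, ℂ),
        f₂ (dilate a φ) = (a : ℂ) ^ (lam + 1) *
          (f₂ φ + (Real.log a : ℂ) * F₁ φ + (Real.log a : ℂ) ^ 2 * F₀ φ)) := by
  classical
  have hS0 : ∀ a : ℝ, 0 < a → ((a : ℂ)) ^ (lam + 1) ≠ 0 := by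
    intro a ha h
    rw [Complex.cpow_eq_zero_iff] at h
    exact (Complex.ofReal_ne_zero.mpr ha.ne') h.1
  have hSmul : ∀ a b : ℝ, 0 < a → 0 < b →
      ((a * b : ℝ) : ℂ) ^ (lam + 1) = (a : ℂ) ^ (lam + 1) * (b : ℂ) ^ (lam + 1) := by
    intro a b ha hb
    rw [Complex.ofReal_mul]
    exact Complex.mul_cpow_ofReal_nonneg ha.le hb.le _
  set K₁ : ℝ → ℂ := fun a => H₁ a / ((a : ℂ)) ^ (lam + 1) with hK₁
  set K₂ : ℝ → ℂ := fun a => H₂ a / ((a : ℂ)) ^ (lam + 1) with hK₂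
  have hH₁' : ∀ a : ℝ, 0 < a → H₁ a = ((a : ℂ)) ^ (lam + 1) * K₁ a := by
    intro a ha
    rw [hK₁]
    field_simp [hS0 a ha]
  have hH₂' : ∀ a : ℝ, 0 < a → H₂ a = ((a : ℂ)) ^ (lam + 1) * K₂ a := by
    intro a ha
    rw [hK₂]
    field_simp [hS0 a ha]
  -- the cocycle identity
  have key : ∀ a b : ℝ, 0 < a → 0 < b → ∀ φ : 𝓢(ℝ, ℂ),
      K₁ (a * b) * f₁ φ + K₂ (a * b) * f₀ φ
        = (K₁ a + K₁ b) * f₁ φ + (K₂ a + K₂ b) * f₀ φ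
          + K₁ a * (Real.log b : ℂ) * g₀ φ := by
    intro a b ha hb φ
    have hc : f₂ (dilate (a * b) φ) = f₂ (dilate a (dilate b φ)) := by
      rw [dilate_comp a b ha.ne' hb.ne']
    rw [hf₂ (a * b) (mul_pos ha hb) φ, hf₂ a ha, hf₂ b hb, hf₁ b hb, hf₀ b hb] at hc
    rw [hSmul a b ha hb] at hc
    simp only [hK₁, hK₂]
    rw [hSmul a b ha hb]
    have h0a := hS0 a ha
    have h0b := hS0 b hb
    field_simp
    linear_combination hc
  -- the coefficient of `g₀` forces `K₁` to be a multiple of `log`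
  have hK₁g : ∀ a : ℝ, 0 < a → ∀ φ : 𝓢(ℝ, ℂ),
      K₁ a * g₀ φ = K₁ (Real.exp 1) * (Real.log a : ℂ) * g₀ φ := by
    intro a ha φ
    have h1 := key a (Real.exp 1) ha (Real.exp_pos 1) φ
    have h2 := key (Real.exp 1) a (Real.exp_pos 1) ha φ
    rw [mul_comm (Real.exp 1) a] at h2
    simp only [Real.log_exp, Complex.ofReal_one] at h1
    linear_combination h2 - h1
  -- continuity of `K₁, K₂` along the exponential
  have hScont : Continuous fun t : ℝ => ((Real.exp t : ℝ) : ℂ) ^ (lam + 1) := by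
    rw [continuous_iff_continuousAt]
    intro t
    have h2 : ContinuousAt (fun t : ℝ => ((Real.exp t : ℝ) : ℂ)) t := by fun_prop
    exact h2.cpow continuousAt_const (Complex.ofReal_mem_slitPlane.mpr (Real.exp_pos t))
  have hK₁cont : Continuous fun t : ℝ => K₁ (Real.exp t) := by
    simp only [hK₁]
    refine Continuous.div ?_ hScont fun t => hS0 _ (Real.exp_pos t)
    rw [continuous_iff_continuousAt]
    intro t
    exact ((hH₁ _ (Real.exp_pos t)).continuousAt).comp Real.continuous_exp.continuousAt
  have hK₂cont : Continuous fun t : ℝ => K₂ (Real.exp t) := by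
    simp only [hK₂]
    refine Continuous.div ?_ hScont fun t => hS0 _ (Real.exp_pos t)
    rw [continuous_iff_continuousAt]
    intro t
    exact ((hH₂ _ (Real.exp_pos t)).continuousAt).comp Real.continuous_exp.continuousAt
  -- the corrected combination is additive, hence linear
  have hLform : ∀ a : ℝ, 0 < a → ∀ φ : 𝓢(ℝ, ℂ),
      K₁ a * f₁ φ + K₂ a * f₀ φ
        = (Real.log a : ℂ) * (K₁ (Real.exp 1) * f₁ φ + K₂ (Real.exp 1) * f₀ φ
            - K₁ (Real.exp 1) / 2 * g₀ φ)
          + K₁ (Real.exp 1) / 2 * (Real.log a : ℂ) ^ 2 * g₀ φ := by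
    intro a ha φ
    set m : ℝ → ℂ := fun t =>
      K₁ (Real.exp t) * f₁ φ + K₂ (Real.exp t) * f₀ φ
        - K₁ (Real.exp 1) / 2 * (t : ℂ) ^ 2 * g₀ φ with hm
    have hmc : Continuous m := by
      rw [hm]
      exact ((hK₁cont.mul continuous_const).add (hK₂cont.mul continuous_const)).sub
        ((continuous_const.mul ((Complex.continuous_ofReal.pow 2))).mul continuous_const)
    have hma : ∀ s t : ℝ, m (s + t) = m s + m t := by
      intro s t
      rw [hm]
      simp only [Real.exp_add]
      have h1 := key (Real.exp s) (Real.exp t) (Real.exp_pos s) (Real.exp_pos t) φ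
      have h2 := hK₁g (Real.exp s) (Real.exp_pos s) φ
      simp only [Real.log_exp] at h1 h2
      push_cast
      linear_combination h1 + (t : ℂ) * h2
    have hmt := cauchy_aux m hmc hma (Real.log a)
    rw [hm] at hmt
    simp only [Real.exp_log ha, Complex.ofReal_one] at hmt
    linear_combination hmt
  -- the witnesses
  refine ⟨K₁ (Real.exp 1) • f₁ + K₂ (Real.exp 1) • f₀ - (K₁ (Real.exp 1) / 2) • g₀,
    (K₁ (Real.exp 1) / 2) • g₀, K₁ (Real.exp 1) • g₀, ?_, ?_, ?_, ?_⟩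
  · intro a ha φ
    simp only [ContinuousLinearMap.smul_apply, smul_eq_mul, hg₀ a ha φ]
    ring
  · intro a ha φ
    simp only [ContinuousLinearMap.smul_apply, smul_eq_mul, hg₀ a ha φ]
    ring
  · intro a ha φ
    simp only [ContinuousLinearMap.sub_apply, ContinuousLinearMap.add_apply,
      ContinuousLinearMap.smul_apply, smul_eq_mul, hf₁ a ha φ, hf₀ a ha φ, hg₀ a ha φ]
    ring
  · intro a ha φ
    rw [hf₂ a ha φ, hH₁' a ha, hH₂' a ha]
    simp only [ContinuousLinearMap.sub_apply, ContinuousLinearMap.add_apply,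
      ContinuousLinearMap.smul_apply, smul_eq_mul]
    linear_combination ((a : ℂ)) ^ (lam + 1) * hLform a ha φ

end
end

section
/- Let n ≥ 1, λ ∈ ℂ, k ∈ ℕ, and let f be a tempered distribution on ℝⁿ which is a quasi associated homogeneous distribution of degree λ and order k. Then its Fourier transform ℱf (defined by ⟨ℱf, φ⟩ = ⟨f, ℱφ⟩) is a quasi associated homogeneous distribution of degree −λ−n and order k. -/
open MeasureTheory SchwartzMap Complex Finset

noncomputable section

variable {E : Type*} [NormedAddCommGroup E] [NormedSpace ℝ E]

/-- A tempered distribution on `ℝⁿ` is homogeneous of degree `λ` if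
`⟨f, φ(·/a)⟩ = a^(λ+n) ⟨f, φ⟩` for all `a > 0` and all Schwartz `φ`. -/
def IsHomogeneousN (n : ℕ) (lam : ℂ)
    (f : 𝓢(EuclideanSpace ℝ (Fin n), ℂ) →L[ℂ] ℂ) : Prop :=
  ∀ a : ℝ, 0 < a → ∀ φ : 𝓢(EuclideanSpace ℝ (Fin n), ℂ),
    f (dilate a φ) = (a : ℂ) ^ (lam + n) * f φ

/-- The Euler operator `φ ↦ (x ↦ ∑_{j=1}^{n} x_j ∂φ/∂x_j (x))` on Schwartz functions. -/
def eulerOp (n : ℕ) :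
    𝓢(EuclideanSpace ℝ (Fin n), ℂ) →L[ℝ] 𝓢(EuclideanSpace ℝ (Fin n), ℂ) :=
  ∑ j : Fin n,
    (SchwartzMap.bilinLeftCLM
        ((ContinuousLinearMap.lsmul ℝ ℝ : ℝ →L[ℝ] ℂ →L[ℝ] ℂ).flip)
        (EuclideanSpace.proj (𝕜 := ℝ) j).hasTemperateGrowth).comp
      (SchwartzMap.evalCLM ℝ (EuclideanSpace ℝ (Fin n)) ℂ (EuclideanSpace.single j (1 : ℝ)) ∘L
        SchwartzMap.fderivCLM ℝ (EuclideanSpace ℝ (Fin n)) ℂ)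

/-- The Euler operator is indeed `x ↦ ∑_j x_j (∂φ/∂x_j)(x)`. -/
lemma eulerOp_apply (n : ℕ) (φ : 𝓢(EuclideanSpace ℝ (Fin n), ℂ))
    (x : EuclideanSpace ℝ (Fin n)) :
    eulerOp n φ x
      = ∑ j : Fin n, x j • fderiv ℝ (⇑φ) x (EuclideanSpace.single j (1 : ℝ)) := by
  have h1 : (⇑(eulerOp n φ) : EuclideanSpace ℝ (Fin n) → ℂ)
      = ∑ j : Fin n, ⇑((SchwartzMap.bilinLeftCLM
          ((ContinuousLinearMap.lsmul ℝ ℝ : ℝ →L[ℝ] ℂ →L[ℝ] ℂ).flip)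
          (EuclideanSpace.proj (𝕜 := ℝ) j).hasTemperateGrowth)
        ((SchwartzMap.evalCLM ℝ (EuclideanSpace ℝ (Fin n)) ℂ (EuclideanSpace.single j (1 : ℝ)) ∘L
        SchwartzMap.fderivCLM ℝ (EuclideanSpace ℝ (Fin n)) ℂ) φ)) := by
    rw [eulerOp, ContinuousLinearMap.sum_apply]
    exact map_sum (FunLike.coeAddMonoidHom (F := 𝓢(EuclideanSpace ℝ (Fin n), ℂ))
      (α := EuclideanSpace ℝ (Fin n)) (β := ℂ)) _ _
  have h2 := congrFun h1 x
  rw [Finset.sum_apply] at h2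
  rw [h2]
  refine Finset.sum_congr rfl fun j _ => ?_
  have h3 : ((SchwartzMap.bilinLeftCLM
        ((ContinuousLinearMap.lsmul ℝ ℝ : ℝ →L[ℝ] ℂ →L[ℝ] ℂ).flip)
        (EuclideanSpace.proj (𝕜 := ℝ) j).hasTemperateGrowth)
      ((SchwartzMap.evalCLM ℝ (EuclideanSpace ℝ (Fin n)) ℂ (EuclideanSpace.single j (1 : ℝ)) ∘L
        SchwartzMap.fderivCLM ℝ (EuclideanSpace ℝ (Fin n)) ℂ) φ)) x
      = x j • ((SchwartzMap.evalCLM ℝ (EuclideanSpace ℝ (Fin n)) ℂ (EuclideanSpace.single j (1 : ℝ)) ∘L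
        SchwartzMap.fderivCLM ℝ (EuclideanSpace ℝ (Fin n)) ℂ) φ) x := rfl
  rw [h3]
  rfl

/-- QAHD of degree `λ` and order `k` on `ℝⁿ`: for `k = 0` a homogeneous distribution of
degree `λ`; for `k ≥ 1`, there are QAHDs `g j` of degree `λ` and order `j` for `j < k` with
`⟨f, φ(·/a)⟩ = a^(λ+n) ⟨f, φ⟩ + ∑_{r=1}^{k} a^(λ+n) (log a)^r ⟨g (k-r), φ⟩`. -/
inductive IsQAHDN (n : ℕ) (lam : ℂ) :
    ℕ → (𝓢(EuclideanSpace ℝ (Fin n), ℂ) →L[ℂ] ℂ) → Prop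
  | base {f : 𝓢(EuclideanSpace ℝ (Fin n), ℂ) →L[ℂ] ℂ} (hf : IsHomogeneousN n lam f) :
      IsQAHDN n lam 0 f
  | step {k : ℕ} (hk : 0 < k) {f : 𝓢(EuclideanSpace ℝ (Fin n), ℂ) →L[ℂ] ℂ}
      (g : ℕ → (𝓢(EuclideanSpace ℝ (Fin n), ℂ) →L[ℂ] ℂ))
      (hg : ∀ j, j < k → IsQAHDN n lam j (g j))
      (hf : ∀ a : ℝ, 0 < a → ∀ φ : 𝓢(EuclideanSpace ℝ (Fin n), ℂ),
        f (dilate a φ) = (a : ℂ) ^ (lam + n) * f φ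
          + ∑ r ∈ Finset.Icc 1 k,
              (a : ℂ) ^ (lam + n) * (Real.log a : ℂ) ^ r * (g (k - r)) φ) :
      IsQAHDN n lam k f

open FourierTransform RealInnerProductSpace in
lemma fourierIntegral_dilate_aux (n : ℕ) (a : ℝ) (ha : 0 < a)
    (φ : 𝓢(EuclideanSpace ℝ (Fin n), ℂ)) (ξ : EuclideanSpace ℝ (Fin n)) :
    𝓕 (fun x : EuclideanSpace ℝ (Fin n) => φ (a⁻¹ • x)) ξ
      = ((a : ℂ) ^ n) • 𝓕 (⇑φ) (a • ξ) := by
  have ha' : a ≠ 0 := ha.ne'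
  have habs : |a ^ Module.finrank ℝ (EuclideanSpace ℝ (Fin n))| = a ^ n := by
    rw [finrank_euclideanSpace_fin, abs_of_pos (pow_pos ha n)]
  calc 𝓕 (fun x : EuclideanSpace ℝ (Fin n) => φ (a⁻¹ • x)) ξ
      = ∫ v, (fun y : EuclideanSpace ℝ (Fin n) =>
          (𝐞 (-⟪a • y, ξ⟫) : ℂ) • φ y) (a⁻¹ • v) := by
        rw [Real.fourier_eq]
        congr 1
        ext v
        simp [Circle.smul_def, smul_inv_smul₀ ha']
    _ = (a ^ n : ℝ) • ∫ y, (𝐞 (-⟪a • y, ξ⟫) : ℂ) • φ y := by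
        rw [Measure.integral_comp_inv_smul volume
          (fun y : EuclideanSpace ℝ (Fin n) => (𝐞 (-⟪a • y, ξ⟫) : ℂ) • φ y) a, habs]
    _ = (a ^ n : ℝ) • 𝓕 (⇑φ) (a • ξ) := by
        congr 1
        rw [Real.fourier_eq]
        congr 1
        ext y
        rw [real_inner_smul_left, real_inner_smul_right]
        simp [Circle.smul_def]
    _ = ((a : ℂ) ^ n) • 𝓕 (⇑φ) (a • ξ) := by
        simp [← Complex.ofReal_pow, Complex.real_smul]

/-- Fourier transform of a dilate: `ℱ(φ(·/a)) = aⁿ (ℱφ)(a ·)` on Schwartz functions. -/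
lemma fourierTransformCLM_dilate (n : ℕ) (a : ℝ) (ha : 0 < a)
    (φ : 𝓢(EuclideanSpace ℝ (Fin n), ℂ)) :
    SchwartzMap.fourierTransformCLM ℂ (V := EuclideanSpace ℝ (Fin n)) (E := ℂ) (dilate a φ)
      = ((a : ℂ) ^ n) • dilate a⁻¹
          (SchwartzMap.fourierTransformCLM ℂ (V := EuclideanSpace ℝ (Fin n)) (E := ℂ) φ) := by
  have ha' : a ≠ 0 := ha.ne'
  ext ξ
  have h1 : (⇑(dilate a φ) : EuclideanSpace ℝ (Fin n) → ℂ)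
      = fun x => φ (a⁻¹ • x) := funext fun x => dilate_apply a ha' φ x
  rw [SchwartzMap.smul_apply, SchwartzMap.fourierTransformCLM_apply,
    dilate_apply a⁻¹ (inv_ne_zero ha') _ ξ, SchwartzMap.fourier_coe, h1, inv_inv]
  exact fourierIntegral_dilate_aux n a ha φ ξ

/-- A scalar multiple of a QAHD is a QAHD of the same degree and order. -/
lemma IsQAHDN.smul_const {n : ℕ} {lam : ℂ} {k : ℕ}
    {f : 𝓢(EuclideanSpace ℝ (Fin n), ℂ) →L[ℂ] ℂ} (c : ℂ)
    (hf : IsQAHDN n lam k f) : IsQAHDN n lam k (c • f) := by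
  induction hf with
  | base hf =>
      refine .base fun a ha φ => ?_
      simp only [ContinuousLinearMap.smul_apply, smul_eq_mul, hf a ha φ]
      ring
  | step hk g hg hrel ih =>
      refine .step hk (fun j => c • g j) (fun j hj => ih j hj) fun a ha φ => ?_
      simp only [ContinuousLinearMap.smul_apply, smul_eq_mul, hrel a ha φ, mul_add,
        Finset.mul_sum]
      congr 1
      · ring
      · exact Finset.sum_congr rfl fun r _ => by ring

lemma cpow_key (a : ℝ) (ha : 0 < a) (lam : ℂ) (n : ℕ) :
    ((a : ℂ) ^ n) * (((a : ℂ))⁻¹ ^ (lam + n)) = (a : ℂ) ^ (-lam - n + n) := by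
  have hne : (a : ℂ) ≠ 0 := Complex.ofReal_ne_zero.mpr ha.ne'
  have harg : Complex.arg (a : ℂ) ≠ Real.pi := by
    rw [Complex.arg_ofReal_of_nonneg ha.le]
    exact (Real.pi_ne_zero).symm
  rw [Complex.inv_cpow _ _ harg, ← Complex.cpow_neg, ← Complex.cpow_natCast,
    ← Complex.cpow_add _ _ hne]
  ring_nf


/-- the Fourier transform `ℱf = f ∘ ℱ` (with `⟨ℱf, φ⟩ = ⟨f, ℱφ⟩`) of a QAHD
of degree `λ` and order `k` on `ℝⁿ` is a QAHD of degree `−λ−n` and order `k`. -/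
theorem stmt_18 (n : ℕ) (hn : 1 ≤ n) (lam : ℂ) (k : ℕ)
    (f : 𝓢(EuclideanSpace ℝ (Fin n), ℂ) →L[ℂ] ℂ)
    (hf : IsQAHDN n lam k f) :
    IsQAHDN n (-lam - n) k
      (f.comp (SchwartzMap.fourierTransformCLM ℂ
        (V := EuclideanSpace ℝ (Fin n)) (E := ℂ))) := by
  set F := SchwartzMap.fourierTransformCLM ℂ (V := EuclideanSpace ℝ (Fin n)) (E := ℂ)
  induction hf with
  | @base f hf =>
      refine .base fun a ha φ => ?_
      have ha' : a ≠ 0 := ha.ne'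
      rw [ContinuousLinearMap.comp_apply, fourierTransformCLM_dilate n a ha φ, _root_.map_smul,
        smul_eq_mul, hf a⁻¹ (inv_pos.mpr ha) (F φ)]
      push_cast
      rw [← mul_assoc, cpow_key a ha lam n]
      rfl
  | @step k hk f g hg hrel ih =>
      refine .step hk (fun j => ((-1 : ℂ) ^ (k - j)) • ((g j).comp F))
        (fun j hj => IsQAHDN.smul_const _ (ih j hj)) fun a ha φ => ?_
      have ha' : a ≠ 0 := ha.ne'
      rw [ContinuousLinearMap.comp_apply, fourierTransformCLM_dilate n a ha φ, _root_.map_smul,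
        smul_eq_mul, hrel a⁻¹ (inv_pos.mpr ha) (F φ)]
      push_cast
      rw [mul_add, Finset.mul_sum]
      congr 1
      · rw [← mul_assoc, cpow_key a ha lam n]
        rfl
      · refine Finset.sum_congr rfl fun r hr => ?_
        obtain ⟨hr1, hr2⟩ := Finset.mem_Icc.mp hr
        rw [Real.log_inv]
        have hkr : k - (k - r) = r := Nat.sub_sub_self hr2
        simp only [ContinuousLinearMap.smul_apply, ContinuousLinearMap.comp_apply,
          ContinuousLinearMap.coe_smul', ContinuousLinearMap.coe_comp', Pi.smul_apply,
          Function.comp_apply, smul_eq_mul, hkr]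
        push_cast
        rw [← mul_assoc, ← mul_assoc, cpow_key a ha lam n]
        ring


end
end
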